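/- Main proposition: Let H be a real Hilbert space, U a weakly mixing surjective linear isometry of H, and ξ a star-cyclic unit vector for U. Then there is a surjective linear isometry V of H, conjugate to U by an isometric isomorphism, such that (a) ξ is star-cyclic for V and ⟨U^i ξ, ξ⟩ = ⟨V^i ξ, ξ⟩ for all i ∈ ℤ, and (b) limsup_n (1/n)∑_{i=0}^{n-1} ⟨U^i ξ, V^i ξ⟩ = 1 and liminf_n (1/n)∑_{i=0}^{n-1} ⟨U^i ξ, V^i ξ⟩ = -1. -/

import Mathlib

open scoped RealInnerProductSpace
open Filter
open Submodule

set_option linter.unusedSectionVars false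
set_option maxHeartbeats 1000000

section AuxWM

variable {H : Type*} [NormedAddCommGroup H] [InnerProductSpace ℝ H] [CompleteSpace H]

/-- Span of the orbit `{U^i ξ : i ≤ a}` (nonnegative powers). -/
noncomputable def wmOrbSpan (U : H ≃ₗᵢ[ℝ] H) (ξ : H) (a : ℕ) : Submodule ℝ H :=
  Submodule.span ℝ ((fun i => (U ^ i) ξ) '' Set.Iic a)

instance wmOrbSpan_fd (U : H ≃ₗᵢ[ℝ] H) (ξ : H) (a : ℕ) :
    FiniteDimensional ℝ (wmOrbSpan U ξ a) :=
  FiniteDimensional.span_of_finite ℝ ((Set.finite_Iic a).image _)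

variable (U : H ≃ₗᵢ[ℝ] H) (ξ : H)
  (hmix : ∀ (K : Submodule ℝ H) [FiniteDimensional ℝ K] (x : H),
      Filter.Tendsto (fun m : ℕ => (1 / (m : ℝ)) *
        ∑ i ∈ Finset.range m, ‖(orthogonalProjection K ((U ^ i) x) : H)‖)
        Filter.atTop (nhds 0))

lemma wmOrbSpan_mono {a b : ℕ} (h : a ≤ b) : wmOrbSpan U ξ a ≤ wmOrbSpan U ξ b :=
  Submodule.span_mono (Set.image_mono (Set.Iic_subset_Iic.2 h))

lemma wmOrbSpan_mem {a i : ℕ} (h : i ≤ a) : (U ^ i) ξ ∈ wmOrbSpan U ξ a :=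
  Submodule.subset_span ⟨i, h, rfl⟩

include hmix in
lemma wm_exists_pick (a b : ℕ) (ε : ℝ) (hε : 0 < ε) :
    ∃ M : ℕ, b ≤ M ∧ 1 ≤ M ∧
      (1 / (M : ℝ)) * ∑ i ∈ Finset.range M,
        ‖(orthogonalProjection (wmOrbSpan U ξ a) ((U ^ i) ξ) : H)‖ ≤ ε := by
  have h := (hmix (wmOrbSpan U ξ a) ξ).eventually_lt_const hε
  obtain ⟨M, hM1, hM2⟩ := ((eventually_ge_atTop (max b 1)).and h).exists
  exact ⟨M, le_trans (le_max_left _ _) hM1, le_trans (le_max_right _ _) hM1, hM2.le⟩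

noncomputable def wmPick (a b : ℕ) (ε : ℝ) (hε : 0 < ε) : ℕ :=
  (wm_exists_pick U ξ hmix a b ε hε).choose

lemma wmPick_spec (a b : ℕ) (ε : ℝ) (hε : 0 < ε) :
    b ≤ wmPick U ξ hmix a b ε hε ∧ 1 ≤ wmPick U ξ hmix a b ε hε ∧
      (1 / (wmPick U ξ hmix a b ε hε : ℝ)) * ∑ i ∈ Finset.range (wmPick U ξ hmix a b ε hε),
        ‖(orthogonalProjection (wmOrbSpan U ξ a) ((U ^ i) ξ) : H)‖ ≤ ε :=
  (wm_exists_pick U ξ hmix a b ε hε).choose_spec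

/-- `wmSeq k = (N k, n k)`. -/
noncomputable def wmSeq : ℕ → ℕ × ℕ
  | 0 => (0, wmPick U ξ hmix 0 ((0 + 1) * (0 + 1)) (1 / ((0 : ℕ) + 1)) (by positivity))
  | k + 1 =>
      let N := wmPick U ξ hmix (wmSeq k).2 (wmSeq k).2 (1 / ((k : ℕ) + 1)) (by positivity)
      (N, wmPick U ξ hmix N ((k + 1 + 1) * (N + 1)) (1 / ((k + 1 : ℕ) + 1)) (by positivity))

noncomputable def wmN (k : ℕ) : ℕ := (wmSeq U ξ hmix k).1
noncomputable def wmn (k : ℕ) : ℕ := (wmSeq U ξ hmix k).2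

lemma wmn_spec (k : ℕ) :
    (k + 1) * (wmN U ξ hmix k + 1) ≤ wmn U ξ hmix k ∧
      (1 / (wmn U ξ hmix k : ℝ)) * ∑ i ∈ Finset.range (wmn U ξ hmix k),
        ‖(orthogonalProjection (wmOrbSpan U ξ (wmN U ξ hmix k)) ((U ^ i) ξ) : H)‖
        ≤ 1 / ((k : ℝ) + 1) := by
  cases k with
  | zero =>
      have h := wmPick_spec U ξ hmix 0 ((0 + 1) * (0 + 1)) (1 / ((0 : ℕ) + 1)) (by positivity)
      exact ⟨by simpa [wmN, wmn, wmSeq] using h.1, h.2.2⟩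
  | succ k =>
      have h := wmPick_spec U ξ hmix (wmN U ξ hmix (k + 1))
        ((k + 1 + 1) * (wmN U ξ hmix (k + 1) + 1)) (1 / ((k + 1 : ℕ) + 1)) (by positivity)
      constructor
      · have := h.1
        simpa [wmN, wmn, wmSeq] using this
      · have := h.2.2
        push_cast at this ⊢
        simpa [wmN, wmn, wmSeq, orthogonalProjection] using this

lemma wmN_succ_spec (k : ℕ) :
    wmn U ξ hmix k ≤ wmN U ξ hmix (k + 1) ∧
      (1 / (wmN U ξ hmix (k + 1) : ℝ)) * ∑ i ∈ Finset.range (wmN U ξ hmix (k + 1)),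
        ‖(orthogonalProjection (wmOrbSpan U ξ (wmn U ξ hmix k)) ((U ^ i) ξ) : H)‖
        ≤ 1 / ((k : ℝ) + 1) := by
  have h := wmPick_spec U ξ hmix (wmn U ξ hmix k) (wmn U ξ hmix k) (1 / ((k : ℕ) + 1))
    (by positivity)
  exact ⟨by simpa [wmN, wmn, wmSeq] using h.1, by simpa [wmN, wmn, wmSeq] using h.2.2⟩

lemma wmN_lt_wmn (k : ℕ) : wmN U ξ hmix k < wmn U ξ hmix k := by
  have h := (wmn_spec U ξ hmix k).1
  have h2 : wmN U ξ hmix k + 1 ≤ (k + 1) * (wmN U ξ hmix k + 1) := by nlinarith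
  omega

lemma wmn_ge (k : ℕ) : k + 1 ≤ wmn U ξ hmix k := by
  have h := (wmn_spec U ξ hmix k).1
  have h2 : k + 1 ≤ (k + 1) * (wmN U ξ hmix k + 1) := by nlinarith
  omega

lemma wmN_mono : Monotone (wmN U ξ hmix) :=
  monotone_nat_of_le_succ fun k =>
    (wmN_lt_wmn U ξ hmix k).le.trans (wmN_succ_spec U ξ hmix k).1

lemma wmn_mono : Monotone (wmn U ξ hmix) :=
  monotone_nat_of_le_succ fun k =>
    ((wmN_succ_spec U ξ hmix k).1).trans (wmN_lt_wmn U ξ hmix (k + 1)).le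

lemma wmN_ge (k : ℕ) : k ≤ wmN U ξ hmix k := by
  cases k with
  | zero => exact Nat.zero_le _
  | succ k =>
      have h1 := wmn_ge U ξ hmix k
      have h2 := (wmN_succ_spec U ξ hmix k).1
      omega

/-- The orthogonal complement, within the orbit span up to `b`, of the orbit span up to `a`. -/
noncomputable def wmT (a b : ℕ) : Submodule ℝ H :=
  Submodule.map
    (((wmOrbSpan U ξ a)ᗮ).subtype ∘ₗ
      (orthogonalProjection ((wmOrbSpan U ξ a)ᗮ) : H →L[ℝ] ((wmOrbSpan U ξ a)ᗮ)).toLinearMap)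
    (wmOrbSpan U ξ b)

lemma wmT_le_orth (a b : ℕ) : wmT U ξ a b ≤ (wmOrbSpan U ξ a)ᗮ := by
  rintro x ⟨v, hv, rfl⟩
  exact Submodule.coe_mem _

lemma wmT_mem {a b : ℕ} {v : H} (hv : v ∈ wmOrbSpan U ξ b) :
    v - (orthogonalProjection (wmOrbSpan U ξ a) v : H) ∈ wmT U ξ a b := by
  refine ⟨v, hv, ?_⟩
  simp [starProjection_orthogonal_val]

lemma wmT_le_orbSpan {a b : ℕ} (h : a ≤ b) : wmT U ξ a b ≤ wmOrbSpan U ξ b := by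
  rintro x ⟨v, hv, rfl⟩
  have heq : ((((wmOrbSpan U ξ a)ᗮ).subtype ∘ₗ
      (orthogonalProjection ((wmOrbSpan U ξ a)ᗮ) : H →L[ℝ] _).toLinearMap)) v
      = v - (orthogonalProjection (wmOrbSpan U ξ a) v : H) := by
    simp [starProjection_orthogonal_val]
  rw [heq]
  exact sub_mem hv (wmOrbSpan_mono U ξ h (Submodule.coe_mem _))

lemma wm_orth_closure (K : Submodule ℝ H) : (K.topologicalClosure)ᗮ = Kᗮ := by
  refine le_antisymm (Submodule.orthogonal_le K.le_topologicalClosure) ?_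
  intro z hz
  rw [Submodule.mem_orthogonal] at hz ⊢
  intro u hu
  have hsub : (K : Set H) ⊆ {v : H | ⟪v, z⟫ = 0} := hz
  have hcl : IsClosed {v : H | ⟪v, z⟫ = 0} :=
    isClosed_eq (Continuous.inner continuous_id continuous_const) continuous_const
  have hu' : u ∈ closure (K : Set H) := by
    have : u ∈ (K.topologicalClosure : Set H) := hu
    rwa [Submodule.topologicalClosure_coe] at this
  exact (IsClosed.closure_subset_iff hcl).2 hsub hu'

lemma wm_proj_coe_norm_le (K : Submodule ℝ H) [HasOrthogonalProjection K] (v : H) :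
    ‖(orthogonalProjection K v : H)‖ ≤ ‖v‖ := by
  calc ‖(orthogonalProjection K v : H)‖ = ‖orthogonalProjection K v‖ := rfl
    _ ≤ ‖orthogonalProjection K‖ * ‖v‖ := (orthogonalProjection K).le_opNorm v
    _ ≤ 1 * ‖v‖ := mul_le_mul_of_nonneg_right (orthogonalProjection_norm_le K) (norm_nonneg v)
    _ = ‖v‖ := one_mul _

lemma wm_key {ι : Type*} (T : ι → Submodule ℝ H) (C K : Submodule ℝ H)
    [HasOrthogonalProjection C] [HasOrthogonalProjection K]
    [HasOrthogonalProjection (⨆ i, T i).topologicalClosure] (x : H)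
    (hCS : C ≤ (⨆ i, T i).topologicalClosure)
    (hCK : C ≤ K)
    (h : ∀ i, T i ≤ C ∨ ((∀ t ∈ T i, ⟪t, x⟫ = 0) ∧ T i ≤ Cᗮ)) :
    ‖(orthogonalProjection ((⨆ i, T i).topologicalClosure) x : H)‖ ≤
      ‖(orthogonalProjection K x : H)‖ := by
  set S := (⨆ i, T i).topologicalClosure with hSdef
  set y : H := (orthogonalProjection S x : H) with hy
  have hyS : y ∈ S := Submodule.coe_mem _
  have hxy : x - y ∈ Sᗮ := sub_starProjection_mem_orthogonal x
  set z : H := y - (orthogonalProjection C y : H) with hzdef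
  have hzC : z ∈ Cᗮ := sub_starProjection_mem_orthogonal y
  have hzT : ∀ i, ∀ t ∈ T i, ⟪t, z⟫ = 0 := by
    intro i t ht
    rcases h i with hle | ⟨hx0, hC0⟩
    · exact (Submodule.mem_orthogonal _ z).1 hzC t (hle ht)
    · have htS : t ∈ S := (le_trans (le_iSup T i) (Submodule.le_topologicalClosure _)) ht
      have h2 := (Submodule.mem_orthogonal S (x - y)).1 hxy t htS
      rw [inner_sub_right] at h2
      have h1 : ⟪t, y⟫ = 0 := by rw [hx0 t ht] at h2; linarith
      have h3 : ⟪t, (orthogonalProjection C y : H)⟫ = 0 := by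
        have := (Submodule.mem_orthogonal C t).1 (hC0 ht)
          ((orthogonalProjection C y : H)) (Submodule.coe_mem _)
        rw [real_inner_comm] at this; exact this
      rw [hzdef, inner_sub_right, h1, h3, sub_zero]
  have hzS' : z ∈ Sᗮ := by
    rw [hSdef, wm_orth_closure, ← Submodule.iInf_orthogonal]
    exact Submodule.mem_iInf _ |>.2 fun i => (Submodule.mem_orthogonal _ z).2 (hzT i)
  have hzS : z ∈ S := sub_mem hyS (hCS (Submodule.coe_mem _))
  have hz0 : z = 0 := by
    have := (Submodule.mem_orthogonal S z).1 hzS' z hzS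
    exact inner_self_eq_zero.1 this
  have hyC : y ∈ C := by
    have hyeq : y = (orthogonalProjection C y : H) := by rwa [sub_eq_zero] at hz0
    rw [hyeq]; exact Submodule.coe_mem _
  have hyK : y ∈ K := hCK hyC
  have h1 : ‖y‖ ^ 2 = ⟪x, y⟫ := by
    have h2 := (Submodule.mem_orthogonal S (x - y)).1 hxy y hyS
    rw [real_inner_comm] at h2
    rw [inner_sub_left] at h2
    have h3 : ⟪y, y⟫ = ‖y‖ ^ 2 := real_inner_self_eq_norm_sq y
    linarith
  have h2 : ⟪x, y⟫ = ⟪(orthogonalProjection K x : H), y⟫ := by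
    have : ⟪x - (orthogonalProjection K x : H), y⟫ = 0 := starProjection_inner_eq_zero x y hyK
    rw [inner_sub_left] at this; linarith
  have h3 : ⟪(orthogonalProjection K x : H), y⟫ ≤ ‖(orthogonalProjection K x : H)‖ * ‖y‖ :=
    real_inner_le_norm _ _
  rcases eq_or_lt_of_le (norm_nonneg y) with h0 | h0
  · rw [hy] at h0; rw [← h0]; exact norm_nonneg _
  · have h4 : ‖y‖ * ‖y‖ ≤ ‖(orthogonalProjection K x : H)‖ * ‖y‖ := by nlinarith
    exact le_of_mul_le_mul_right h4 h0

lemma wm_refl_inner_orth (S : Submodule ℝ H) [HasOrthogonalProjection S] (v : H)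
    (hv : ‖v‖ = 1) :
    ⟪v, reflection Sᗮ v⟫ = 2 * ‖(orthogonalProjection Sᗮ v : H)‖ ^ 2 - 1 := by
  set p : H := (orthogonalProjection Sᗮ v : H) with hp
  have h1 : reflection Sᗮ v = 2 • p - v := reflection_apply (K := Sᗮ) v
  have h2 : ⟪v - p, p⟫ = 0 :=
    starProjection_inner_eq_zero v p (Submodule.coe_mem _)
  rw [inner_sub_left] at h2
  have h3 : ⟪v, p⟫ = ‖p‖ ^ 2 := by
    have := real_inner_self_eq_norm_sq p; linarith
  have h4 : ⟪v, v⟫ = 1 := by rw [real_inner_self_eq_norm_sq, hv]; norm_num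
  rw [h1, two_smul, inner_sub_right, inner_add_right, h3, h4]
  ring

lemma wm_refl_inner (S : Submodule ℝ H) [HasOrthogonalProjection S] (v : H)
    (hv : ‖v‖ = 1) :
    ⟪v, reflection Sᗮ v⟫ = 1 - 2 * ‖(orthogonalProjection S v : H)‖ ^ 2 := by
  rw [wm_refl_inner_orth S v hv]
  have h := norm_sq_eq_add_norm_sq_projection v S
  have e1 : ‖orthogonalProjection S v‖ = ‖(orthogonalProjection S v : H)‖ := rfl
  have e2 : ‖orthogonalProjection Sᗮ v‖ = ‖(orthogonalProjection Sᗮ v : H)‖ := rfl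
  rw [e1, e2, hv] at h
  nlinarith

end AuxWM

/-- Main proposition: if `U` is a weakly mixing surjective linear isometry of a real Hilbert
space `H` and `ξ` is a star-cyclic unit vector for `U`, then there is a surjective linear
isometry `V`, conjugate to `U`, such that `ξ` is star-cyclic for `V`,
`⟪U^i ξ, ξ⟫ = ⟪V^i ξ, ξ⟫` for all `i ∈ ℤ`, and the averages
`(1/n) ∑_{i<n} ⟪U^i ξ, V^i ξ⟫` have limsup `1` and liminf `-1`. -/
theorem main_proposition
    {H : Type*} [NormedAddCommGroup H] [InnerProductSpace ℝ H] [CompleteSpace H]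
    (U : H ≃ₗᵢ[ℝ] H)
    (hmix : ∀ (K : Submodule ℝ H) [FiniteDimensional ℝ K] (x : H),
      Filter.Tendsto (fun m : ℕ => (1 / (m : ℝ)) *
        ∑ i ∈ Finset.range m, ‖(orthogonalProjection K ((U ^ i) x) : H)‖)
        Filter.atTop (nhds 0))
    (ξ : H) (hξ : ‖ξ‖ = 1)
    (hcyc : (Submodule.span ℝ {x : H | ∃ n : ℤ, (U ^ n) ξ = x}).topologicalClosure = ⊤) :
    ∃ V W : H ≃ₗᵢ[ℝ] H, V = W * U * W⁻¹ ∧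
      (Submodule.span ℝ {x : H | ∃ n : ℤ, (V ^ n) ξ = x}).topologicalClosure = ⊤ ∧
      (∀ i : ℤ, ⟪(U ^ i) ξ, ξ⟫ = ⟪(V ^ i) ξ, ξ⟫) ∧
      Filter.limsup
        (fun n : ℕ => (1 / (n : ℝ)) * ∑ i ∈ Finset.range n, ⟪(U ^ i) ξ, (V ^ i) ξ⟫)
        Filter.atTop = 1 ∧
      Filter.liminf
        (fun n : ℕ => (1 / (n : ℝ)) * ∑ i ∈ Finset.range n, ⟪(U ^ i) ξ, (V ^ i) ξ⟫)
        Filter.atTop = -1 := by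
  classical
  let T : ℕ → Submodule ℝ H := fun k => wmT U ξ (wmN U ξ hmix k) (wmn U ξ hmix k)
  let S : Submodule ℝ H := (⨆ k, T k).topologicalClosure
  haveI hScomp : CompleteSpace S := (Submodule.isClosed_topologicalClosure _).completeSpace_coe
  let W : H ≃ₗᵢ[ℝ] H := reflection Sᗮ
  -- basic facts
  have hx1 : ∀ i : ℕ, ‖(U ^ i) ξ‖ = 1 := fun i => by
    rw [LinearIsometryEquiv.norm_map]; exact hξ
  have hTS : ∀ k, T k ≤ S := fun k =>
    le_trans (le_iSup T k) (Submodule.le_topologicalClosure _)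
  have hxiS : ξ ∈ Sᗮ := by
    have h1 : ∀ k, T k ≤ (wmOrbSpan U ξ 0)ᗮ := fun k =>
      le_trans (wmT_le_orth U ξ _ _)
        (Submodule.orthogonal_le (wmOrbSpan_mono U ξ (Nat.zero_le _)))
    have h2 : S ≤ (wmOrbSpan U ξ 0)ᗮ :=
      Submodule.topologicalClosure_minimal _ (iSup_le h1) (Submodule.isClosed_orthogonal _)
    rw [Submodule.mem_orthogonal]
    intro u hu
    have hξ0 : ξ ∈ wmOrbSpan U ξ 0 := by
      have : (U ^ (0 : ℕ)) ξ = ξ := by simp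
      rw [← this]; exact wmOrbSpan_mem U ξ le_rfl
    have h3 := (Submodule.mem_orthogonal _ u).1 (h2 hu) ξ hξ0
    rwa [real_inner_comm] at h3
  have hWξ : W ξ = ξ := reflection_mem_subspace_eq_self hxiS
  -- bounds on the inner products
  have habs : ∀ i : ℕ, |⟪(U ^ i) ξ, W ((U ^ i) ξ)⟫| ≤ 1 := by
    intro i
    have h2 : ‖W ((U ^ i) ξ)‖ = 1 := by
      rw [LinearIsometryEquiv.norm_map]; exact hx1 i
    calc |⟪(U ^ i) ξ, W ((U ^ i) ξ)⟫| ≤ ‖(U ^ i) ξ‖ * ‖W ((U ^ i) ξ)‖ :=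
          abs_real_inner_le_norm _ _
      _ = 1 := by rw [hx1 i, h2, one_mul]
  -- block estimate
  have hblock : ∀ k : ℕ, ∀ i < wmn U ξ hmix k,
      ⟪(U ^ i) ξ, W ((U ^ i) ξ)⟫ ≤
        2 * ‖(orthogonalProjection (wmOrbSpan U ξ (wmN U ξ hmix k)) ((U ^ i) ξ) : H)‖ - 1 := by
    intro k i hi
    set g : H := (orthogonalProjection (wmOrbSpan U ξ (wmN U ξ hmix k)) ((U ^ i) ξ) : H)
      with hgdef
    have hxmem : (U ^ i) ξ ∈ wmOrbSpan U ξ (wmn U ξ hmix k) := wmOrbSpan_mem U ξ hi.le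
    have htT : (U ^ i) ξ - g ∈ T k := wmT_mem U ξ hxmem
    have htS : (U ^ i) ξ - g ∈ S := hTS k htT
    have h0 : orthogonalProjection Sᗮ ((U ^ i) ξ - g) = 0 :=
      orthogonalProjectionOnto_apply_of_mem_orthogonal
        (S.le_orthogonal_orthogonal htS)
    have hsplit : (orthogonalProjection Sᗮ ((U ^ i) ξ) : H) =
        (orthogonalProjection Sᗮ g : H) := by
      have hmap := map_sub (orthogonalProjection Sᗮ) ((U ^ i) ξ) g
      rw [h0] at hmap
      have h5 : orthogonalProjection Sᗮ ((U ^ i) ξ) = orthogonalProjection Sᗮ g :=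
        (sub_eq_zero.1 hmap.symm)
      rw [h5]
    have h1 : ‖(orthogonalProjection Sᗮ ((U ^ i) ξ) : H)‖ ≤ ‖g‖ := by
      rw [hsplit]; exact wm_proj_coe_norm_le _ _
    have h2 : ⟪(U ^ i) ξ, W ((U ^ i) ξ)⟫ =
        2 * ‖(orthogonalProjection Sᗮ ((U ^ i) ξ) : H)‖ ^ 2 - 1 :=
      wm_refl_inner_orth S _ (hx1 i)
    have h3 : ‖g‖ ≤ 1 := by
      have h6 := wm_proj_coe_norm_le (wmOrbSpan U ξ (wmN U ξ hmix k)) ((U ^ i) ξ)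
      rw [hx1 i] at h6
      exact h6
    have h4 : (0 : ℝ) ≤ ‖(orthogonalProjection Sᗮ ((U ^ i) ξ) : H)‖ := norm_nonneg _
    have h7 : (0 : ℝ) ≤ ‖g‖ := norm_nonneg _
    rw [h2]
    nlinarith
  -- off-block estimate
  have hoff : ∀ k : ℕ, ∀ i < wmN U ξ hmix (k + 1),
      1 - 2 * ‖(orthogonalProjection (wmOrbSpan U ξ (wmn U ξ hmix k)) ((U ^ i) ξ) : H)‖ ≤
        ⟪(U ^ i) ξ, W ((U ^ i) ξ)⟫ := by
    intro k i hi
    set Kk : Submodule ℝ H := wmOrbSpan U ξ (wmn U ξ hmix k) with hKkdef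
    set C : Submodule ℝ H := ⨆ l : Fin (k + 1), T l.1 with hCdef
    have hCK : C ≤ Kk := by
      refine iSup_le fun l => ?_
      have h1 : T l.1 ≤ wmOrbSpan U ξ (wmn U ξ hmix l.1) :=
        wmT_le_orbSpan U ξ (le_of_lt (wmN_lt_wmn U ξ hmix l.1))
      exact h1.trans (wmOrbSpan_mono U ξ (wmn_mono U ξ hmix (Nat.lt_succ_iff.1 l.2)))
    haveI : FiniteDimensional ℝ C := Submodule.finiteDimensional_of_le hCK
    have hCS : C ≤ (⨆ j, T j).topologicalClosure := iSup_le fun l => hTS l.1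
    have hdisj : ∀ l : ℕ, T l ≤ C ∨ ((∀ t ∈ T l, ⟪t, (U ^ i) ξ⟫ = 0) ∧ T l ≤ Cᗮ) := by
      intro l
      by_cases hl : l ≤ k
      · exact Or.inl (le_iSup (fun m : Fin (k + 1) => T m.1) ⟨l, Nat.lt_succ_of_le hl⟩)
      · right
        push_neg at hl
        have hNl : wmN U ξ hmix (k + 1) ≤ wmN U ξ hmix l := wmN_mono U ξ hmix hl
        have hxG : (U ^ i) ξ ∈ wmOrbSpan U ξ (wmN U ξ hmix l) :=
          wmOrbSpan_mem U ξ (Nat.le_of_lt (lt_of_lt_of_le hi hNl))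
        constructor
        · intro t ht
          have h5 := (Submodule.mem_orthogonal _ t).1 (wmT_le_orth U ξ _ _ ht) _ hxG
          rwa [real_inner_comm] at h5
        · intro t ht
          rw [Submodule.mem_orthogonal]
          intro u hu
          have hu2 : u ∈ wmOrbSpan U ξ (wmN U ξ hmix l) := by
            have h3 : wmn U ξ hmix k ≤ wmN U ξ hmix l :=
              le_trans (wmN_succ_spec U ξ hmix k).1 hNl
            exact wmOrbSpan_mono U ξ h3 (hCK hu)
          exact (Submodule.mem_orthogonal _ t).1 (wmT_le_orth U ξ _ _ ht) u hu2
    have hkey := wm_key T C Kk ((U ^ i) ξ) hCS hCK hdisj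
    have hkey' : ‖(orthogonalProjection S ((U ^ i) ξ) : H)‖ ≤
        ‖(orthogonalProjection Kk ((U ^ i) ξ) : H)‖ := hkey
    have h2 : ⟪(U ^ i) ξ, W ((U ^ i) ξ)⟫ =
        1 - 2 * ‖(orthogonalProjection S ((U ^ i) ξ) : H)‖ ^ 2 :=
      wm_refl_inner S _ (hx1 i)
    have h3 : ‖(orthogonalProjection Kk ((U ^ i) ξ) : H)‖ ≤ 1 := by
      have h6 := wm_proj_coe_norm_le Kk ((U ^ i) ξ)
      rw [hx1 i] at h6
      exact h6
    have h4 : (0 : ℝ) ≤ ‖(orthogonalProjection S ((U ^ i) ξ) : H)‖ := norm_nonneg _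
    have h7 : (0 : ℝ) ≤ ‖(orthogonalProjection Kk ((U ^ i) ξ) : H)‖ := norm_nonneg _
    rw [h2]
    nlinarith
  -- the averages
  set gg : ℕ → ℝ := fun n =>
    (1 / (n : ℝ)) * ∑ i ∈ Finset.range n, ⟪(U ^ i) ξ, W ((U ^ i) ξ)⟫ with hgg
  have hga : ∀ n, -1 ≤ gg n ∧ gg n ≤ 1 := by
    intro n
    rcases Nat.eq_zero_or_pos n with rfl | hn
    · simp [hgg]
    · have hnR : (0 : ℝ) < n := by exact_mod_cast hn
      have hs1 : ∑ i ∈ Finset.range n, ⟪(U ^ i) ξ, W ((U ^ i) ξ)⟫ ≤ n := by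
        calc ∑ i ∈ Finset.range n, ⟪(U ^ i) ξ, W ((U ^ i) ξ)⟫
            ≤ ∑ _i ∈ Finset.range n, (1 : ℝ) :=
              Finset.sum_le_sum fun i _ => (abs_le.1 (habs i)).2
          _ = n := by simp
      have hs2 : -(n : ℝ) ≤ ∑ i ∈ Finset.range n, ⟪(U ^ i) ξ, W ((U ^ i) ξ)⟫ := by
        calc -(n : ℝ) = ∑ _i ∈ Finset.range n, (-1 : ℝ) := by simp
          _ ≤ ∑ i ∈ Finset.range n, ⟪(U ^ i) ξ, W ((U ^ i) ξ)⟫ :=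
              Finset.sum_le_sum fun i _ => (abs_le.1 (habs i)).1
      constructor
      · have h := mul_le_mul_of_nonneg_left hs2 (le_of_lt (one_div_pos.2 hnR))
        have e2 : (1 / (n : ℝ)) * (-(n : ℝ)) = -1 := by field_simp
        calc (-1 : ℝ) = (1 / (n : ℝ)) * (-(n : ℝ)) := e2.symm
          _ ≤ gg n := h
      · have h := mul_le_mul_of_nonneg_left hs1 (le_of_lt (one_div_pos.2 hnR))
        have e2 : (1 / (n : ℝ)) * ((n : ℝ)) = 1 := by field_simp
        calc gg n ≤ (1 / (n : ℝ)) * ((n : ℝ)) := h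
          _ = 1 := e2
  -- average estimates
  have hliminf_est : ∀ k : ℕ, gg (wmn U ξ hmix k) ≤ 2 * (1 / ((k : ℝ) + 1)) - 1 := by
    intro k
    obtain ⟨hb1, hbound⟩ := wmn_spec U ξ hmix k
    have hM1 : 1 ≤ wmn U ξ hmix k := le_trans (by nlinarith) hb1
    have hMR : (0 : ℝ) < (wmn U ξ hmix k : ℝ) := by exact_mod_cast hM1
    have hsum : ∑ i ∈ Finset.range (wmn U ξ hmix k), ⟪(U ^ i) ξ, W ((U ^ i) ξ)⟫ ≤
        2 * (∑ i ∈ Finset.range (wmn U ξ hmix k),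
          ‖(orthogonalProjection (wmOrbSpan U ξ (wmN U ξ hmix k)) ((U ^ i) ξ) : H)‖) -
          (wmn U ξ hmix k : ℝ) := by
      calc ∑ i ∈ Finset.range (wmn U ξ hmix k), ⟪(U ^ i) ξ, W ((U ^ i) ξ)⟫
          ≤ ∑ i ∈ Finset.range (wmn U ξ hmix k),
            (2 * ‖(orthogonalProjection (wmOrbSpan U ξ (wmN U ξ hmix k)) ((U ^ i) ξ) : H)‖ - 1) :=
            Finset.sum_le_sum fun i hi => hblock k i (Finset.mem_range.1 hi)
        _ = 2 * (∑ i ∈ Finset.range (wmn U ξ hmix k),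
            ‖(orthogonalProjection (wmOrbSpan U ξ (wmN U ξ hmix k)) ((U ^ i) ξ) : H)‖) -
            (wmn U ξ hmix k : ℝ) := by
            rw [Finset.sum_sub_distrib, ← Finset.mul_sum]
            simp
    have h1 : gg (wmn U ξ hmix k) ≤ (1 / (wmn U ξ hmix k : ℝ)) *
        (2 * (∑ i ∈ Finset.range (wmn U ξ hmix k),
          ‖(orthogonalProjection (wmOrbSpan U ξ (wmN U ξ hmix k)) ((U ^ i) ξ) : H)‖) -
          (wmn U ξ hmix k : ℝ)) :=
      mul_le_mul_of_nonneg_left hsum (le_of_lt (one_div_pos.2 hMR))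
    have h2 : (1 / (wmn U ξ hmix k : ℝ)) *
        (2 * (∑ i ∈ Finset.range (wmn U ξ hmix k),
          ‖(orthogonalProjection (wmOrbSpan U ξ (wmN U ξ hmix k)) ((U ^ i) ξ) : H)‖) -
          (wmn U ξ hmix k : ℝ)) =
        2 * ((1 / (wmn U ξ hmix k : ℝ)) * ∑ i ∈ Finset.range (wmn U ξ hmix k),
          ‖(orthogonalProjection (wmOrbSpan U ξ (wmN U ξ hmix k)) ((U ^ i) ξ) : H)‖) - 1 := by
      field_simp <;> ring
    rw [h2] at h1
    linarith
  have hlimsup_est : ∀ k : ℕ, 1 - 2 * (1 / ((k : ℝ) + 1)) ≤ gg (wmN U ξ hmix (k + 1)) := by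
    intro k
    obtain ⟨hb1, hbound⟩ := wmN_succ_spec U ξ hmix k
    have hM1 : 1 ≤ wmN U ξ hmix (k + 1) := by
      have := wmn_ge U ξ hmix k
      omega
    have hMR : (0 : ℝ) < (wmN U ξ hmix (k + 1) : ℝ) := by exact_mod_cast hM1
    have hsum : (wmN U ξ hmix (k + 1) : ℝ) -
        2 * (∑ i ∈ Finset.range (wmN U ξ hmix (k + 1)),
          ‖(orthogonalProjection (wmOrbSpan U ξ (wmn U ξ hmix k)) ((U ^ i) ξ) : H)‖) ≤
        ∑ i ∈ Finset.range (wmN U ξ hmix (k + 1)), ⟪(U ^ i) ξ, W ((U ^ i) ξ)⟫ := by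
      calc (wmN U ξ hmix (k + 1) : ℝ) -
          2 * (∑ i ∈ Finset.range (wmN U ξ hmix (k + 1)),
            ‖(orthogonalProjection (wmOrbSpan U ξ (wmn U ξ hmix k)) ((U ^ i) ξ) : H)‖)
          = ∑ i ∈ Finset.range (wmN U ξ hmix (k + 1)),
            (1 - 2 * ‖(orthogonalProjection (wmOrbSpan U ξ (wmn U ξ hmix k)) ((U ^ i) ξ) : H)‖) := by
            rw [Finset.sum_sub_distrib, ← Finset.mul_sum]
            simp
        _ ≤ ∑ i ∈ Finset.range (wmN U ξ hmix (k + 1)), ⟪(U ^ i) ξ, W ((U ^ i) ξ)⟫ :=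
            Finset.sum_le_sum fun i hi => hoff k i (Finset.mem_range.1 hi)
    have h1 : (1 / (wmN U ξ hmix (k + 1) : ℝ)) *
        ((wmN U ξ hmix (k + 1) : ℝ) -
          2 * (∑ i ∈ Finset.range (wmN U ξ hmix (k + 1)),
            ‖(orthogonalProjection (wmOrbSpan U ξ (wmn U ξ hmix k)) ((U ^ i) ξ) : H)‖)) ≤
        gg (wmN U ξ hmix (k + 1)) :=
      mul_le_mul_of_nonneg_left hsum (le_of_lt (one_div_pos.2 hMR))
    have h2 : (1 / (wmN U ξ hmix (k + 1) : ℝ)) *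
        ((wmN U ξ hmix (k + 1) : ℝ) -
          2 * (∑ i ∈ Finset.range (wmN U ξ hmix (k + 1)),
            ‖(orthogonalProjection (wmOrbSpan U ξ (wmn U ξ hmix k)) ((U ^ i) ξ) : H)‖)) =
        1 - 2 * ((1 / (wmN U ξ hmix (k + 1) : ℝ)) *
          ∑ i ∈ Finset.range (wmN U ξ hmix (k + 1)),
            ‖(orthogonalProjection (wmOrbSpan U ξ (wmn U ξ hmix k)) ((U ^ i) ξ) : H)‖) := by
      field_simp <;> ring
    rw [h2] at h1
    linarith
  -- powers of V
  have hVz : ∀ i : ℤ, ((W * U * W⁻¹) ^ i) ξ = W ((U ^ i) ξ) := by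
    intro i
    have e1 : (W * U * W⁻¹) ^ i = W * U ^ i * W⁻¹ := by
      have h := map_zpow (MulAut.conj W) U i
      simp only [MulAut.conj_apply] at h
      exact h.symm
    have hWinv : W⁻¹ ξ = ξ := by
      show (reflection Sᗮ)⁻¹ ξ = ξ
      rw [LinearIsometryEquiv.inv_def, reflection_symm]
      exact hWξ
    rw [e1]
    simp only [LinearIsometryEquiv.coe_mul, Function.comp_apply]
    rw [hWinv]
  have hVn : ∀ i : ℕ, ((W * U * W⁻¹) ^ i) ξ = W ((U ^ i) ξ) := by
    intro i
    have h := hVz (i : ℤ)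
    rwa [zpow_natCast, zpow_natCast] at h
  refine ⟨W * U * W⁻¹, W, rfl, ?_, ?_, ?_, ?_⟩
  · -- star-cyclicity of ξ for V
    have hset : {y : H | ∃ n : ℤ, ((W * U * W⁻¹) ^ n) ξ = y} =
        ⇑W '' {y : H | ∃ n : ℤ, (U ^ n) ξ = y} := by
      ext y
      constructor
      · rintro ⟨n, rfl⟩
        exact ⟨(U ^ n) ξ, ⟨n, rfl⟩, (hVz n).symm⟩
      · rintro ⟨z, ⟨n, rfl⟩, rfl⟩
        exact ⟨n, hVz n⟩
    rw [hset]
    have hWl : ⇑W '' {y : H | ∃ n : ℤ, (U ^ n) ξ = y} =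
        ⇑(W.toLinearEquiv.toLinearMap) '' {y : H | ∃ n : ℤ, (U ^ n) ξ = y} := rfl
    rw [hWl, ← Submodule.map_span]
    rw [← Submodule.dense_iff_topologicalClosure_eq_top] at hcyc ⊢
    have hcoe : ((Submodule.span ℝ {y : H | ∃ n : ℤ, (U ^ n) ξ = y}).map
        W.toLinearEquiv.toLinearMap : Set H) =
        ⇑W '' ((Submodule.span ℝ {y : H | ∃ n : ℤ, (U ^ n) ξ = y} : Submodule ℝ H) : Set H) := by
      rw [Submodule.map_coe]
      rfl
    rw [dense_iff_closure_eq] at hcyc ⊢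
    rw [hcoe]
    have himg := W.toHomeomorph.image_closure
      ((Submodule.span ℝ {y : H | ∃ n : ℤ, (U ^ n) ξ = y} : Submodule ℝ H) : Set H)
    have hWh : ⇑W.toHomeomorph = ⇑W := rfl
    rw [hWh] at himg
    rw [← himg, hcyc, Set.image_univ]
    exact W.surjective.range_eq
  · -- spectral measures agree
    intro i
    rw [hVz i]
    calc ⟪(U ^ i) ξ, ξ⟫ = ⟪W ((U ^ i) ξ), W ξ⟫ := (W.inner_map_map _ _).symm
      _ = ⟪W ((U ^ i) ξ), ξ⟫ := by rw [hWξ]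
  · -- limsup
    have hfun : (fun n : ℕ => (1 / (n : ℝ)) *
        ∑ i ∈ Finset.range n, ⟪(U ^ i) ξ, ((W * U * W⁻¹) ^ i) ξ⟫) = gg := by
      funext n
      rw [hgg]
      congr 1
      exact Finset.sum_congr rfl fun i _ => by rw [hVn i]
    rw [hfun]
    have hbddA : IsBoundedUnder (· ≤ ·) atTop gg :=
      ⟨1, Filter.eventually_map.2 (Filter.Eventually.of_forall fun n => (hga n).2)⟩
    have hbddB : IsBoundedUnder (· ≥ ·) atTop gg :=
      ⟨-1, Filter.eventually_map.2 (Filter.Eventually.of_forall fun n => (hga n).1)⟩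
    refine le_antisymm ?_ ?_
    · exact Filter.limsup_le_of_le hbddB.isCoboundedUnder_le
        (Filter.Eventually.of_forall fun n => (hga n).2)
    · have hten : Filter.Tendsto (fun k : ℕ => 1 - 2 * (1 / ((k : ℝ) + 1))) atTop (nhds 1) := by
        have h0 : Filter.Tendsto (fun k : ℕ => (1 / ((k : ℝ) + 1))) atTop (nhds 0) :=
          tendsto_one_div_add_atTop_nhds_zero_nat
        have h1 : Filter.Tendsto (fun k : ℕ => 2 * (1 / ((k : ℝ) + 1))) atTop (nhds 0) := by
          simpa using h0.const_mul 2
        have h2 : Filter.Tendsto (fun k : ℕ => 1 - 2 * (1 / ((k : ℝ) + 1))) atTop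
            (nhds (1 - 0)) :=
          (tendsto_const_nhds : Filter.Tendsto (fun _ : ℕ => (1 : ℝ)) atTop (nhds 1)).sub h1
        simpa using h2
      refine le_of_tendsto hten (Filter.Eventually.of_forall fun k => ?_)
      refine Filter.le_limsup_of_frequently_le ?_ hbddA
      rw [Filter.frequently_atTop]
      intro m
      refine ⟨wmN U ξ hmix (max k m + 1), ?_, ?_⟩
      · calc m ≤ max k m := le_max_right _ _
          _ ≤ wmN U ξ hmix (max k m) := wmN_ge U ξ hmix _
          _ ≤ wmN U ξ hmix (max k m + 1) := wmN_mono U ξ hmix (Nat.le_succ _)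
      · have h1 := hlimsup_est (max k m)
        have hk : (k : ℝ) ≤ ((max k m : ℕ) : ℝ) := by exact_mod_cast le_max_left k m
        have h2 : (1 : ℝ) / (((max k m : ℕ) : ℝ) + 1) ≤ 1 / ((k : ℝ) + 1) :=
          one_div_le_one_div_of_le (by positivity) (by linarith)
        linarith
  · -- liminf
    have hfun : (fun n : ℕ => (1 / (n : ℝ)) *
        ∑ i ∈ Finset.range n, ⟪(U ^ i) ξ, ((W * U * W⁻¹) ^ i) ξ⟫) = gg := by
      funext n
      rw [hgg]
      congr 1
      exact Finset.sum_congr rfl fun i _ => by rw [hVn i]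
    rw [hfun]
    have hbddA : IsBoundedUnder (· ≤ ·) atTop gg :=
      ⟨1, Filter.eventually_map.2 (Filter.Eventually.of_forall fun n => (hga n).2)⟩
    have hbddB : IsBoundedUnder (· ≥ ·) atTop gg :=
      ⟨-1, Filter.eventually_map.2 (Filter.Eventually.of_forall fun n => (hga n).1)⟩
    refine le_antisymm ?_ ?_
    · have hten : Filter.Tendsto (fun k : ℕ => 2 * (1 / ((k : ℝ) + 1)) - 1) atTop
          (nhds (-1)) := by
        have h0 : Filter.Tendsto (fun k : ℕ => (1 / ((k : ℝ) + 1))) atTop (nhds 0) :=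
          tendsto_one_div_add_atTop_nhds_zero_nat
        have h1 : Filter.Tendsto (fun k : ℕ => 2 * (1 / ((k : ℝ) + 1))) atTop (nhds 0) := by
          simpa using h0.const_mul 2
        have h2 : Filter.Tendsto (fun k : ℕ => 2 * (1 / ((k : ℝ) + 1)) - 1) atTop
            (nhds (0 - 1)) :=
          h1.sub (tendsto_const_nhds : Filter.Tendsto (fun _ : ℕ => (1 : ℝ)) atTop (nhds 1))
        simpa using h2
      refine ge_of_tendsto hten (Filter.Eventually.of_forall fun k => ?_)
      refine Filter.liminf_le_of_frequently_le ?_ hbddB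
      rw [Filter.frequently_atTop]
      intro m
      refine ⟨wmn U ξ hmix (max k m), ?_, ?_⟩
      · calc m ≤ max k m := le_max_right _ _
          _ ≤ max k m + 1 := Nat.le_succ _
          _ ≤ wmn U ξ hmix (max k m) := wmn_ge U ξ hmix _
      · have h1 := hliminf_est (max k m)
        have hk : (k : ℝ) ≤ ((max k m : ℕ) : ℝ) := by exact_mod_cast le_max_left k m
        have h2 : (1 : ℝ) / (((max k m : ℕ) : ℝ) + 1) ≤ 1 / ((k : ℝ) + 1) :=
          one_div_le_one_div_of_le (by positivity) (by linarith)
        linarith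
    · exact Filter.le_liminf_of_le hbddA.isCoboundedUnder_ge
        (Filter.Eventually.of_forall fun n => (hga n).1)
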